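/- Let (k,k̂), (ℓ,ℓ̂) ∈ (L \ 𝔽_q)² and suppose k̂ = k^[n] for some n ∈ {1,2}. Then (Σ₁(k,k̂), Σ₂(k,k̂)) = (Σ₁(ℓ,ℓ̂), Σ₂(ℓ,ℓ̂)) if and only if there exists r ∈ {0,1,2} such that (ℓ, ℓ̂) = (k^[r], k^[n+r]) or (ℓ, ℓ̂) = (k^[n+r], k^[r]) (exponents of the Frobenius taken modulo 3). -/

import Mathlib

open Matrix Polynomial

/-- A `[3×3;3]`-MRD code: a 3-dimensional `F`-subspace of the `3×3` matrices over `F`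
in which every nonzero matrix is invertible. -/
def IsMRD (F : Type*) [Field F] [Fintype F]
    (Cc : Submodule F (Matrix (Fin 3) (Fin 3) F)) : Prop :=
  Module.finrank F Cc = 3 ∧ ∀ M ∈ Cc, M ≠ 0 → IsUnit M

/-- The companion matrix `C_f` of `f = x³ - c·x² - b·x - a`, with rows
`(0,0,a)`, `(1,0,b)`, `(0,1,c)`. -/
def cMat (F : Type*) [Field F] (a b c : F) : Matrix (Fin 3) (Fin 3) F :=
  !![0, 0, a; 1, 0, b; 0, 1, c]

/-- The monic cubic `x³ - c·x² - b·x - a`. -/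
noncomputable def cubic (F : Type*) [Field F] (a b c : F) : Polynomial F :=
  X ^ 3 - C c * X ^ 2 - C b * X - C a

/-- The set `𝒮` of triples `(I, C_f, Z)` with `f` a monic irreducible cubic,
`Z` having first column `(0,0,1)ᵀ`, and the span of `{I, C_f, Z}` a `[3×3;3]`-MRD code. -/
def mrdS (F : Type*) [Field F] [Fintype F] :
    Set (Matrix (Fin 3) (Fin 3) F × Matrix (Fin 3) (Fin 3) F × Matrix (Fin 3) (Fin 3) F) :=
  {t | t.1 = 1 ∧
       (∃ a b c : F, Irreducible (cubic F a b c) ∧ t.2.1 = cMat F a b c) ∧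
       t.2.2 0 0 = 0 ∧ t.2.2 1 0 = 0 ∧ t.2.2 2 0 = 1 ∧
       IsMRD F (Submodule.span F {t.1, t.2.1, t.2.2})}

/-- `T_q`: all 3-dimensional subspaces of `F^{3×3}`. -/
def Tset (F : Type*) [Field F] [Fintype F] : Set (Submodule F (Matrix (Fin 3) (Fin 3) F)) :=
  {Cc | Module.finrank F Cc = 3}

/-- `T̂_q`: all `[3×3;3]`-MRD codes. -/
def ThatSet (F : Type*) [Field F] [Fintype F] : Set (Submodule F (Matrix (Fin 3) (Fin 3) F)) :=
  {Cc | IsMRD F Cc}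

/-- `k ↦ k^{q^i}`, the `i`-th Frobenius power (with `q = |F|`), written `k^[i]`. -/
def frk (F : Type*) [Fintype F] (L : Type*) [Field L] (i : ℕ) (k : L) : L :=
  k ^ (Fintype.card F ^ i)

/-- `σ₁(k) = k + k^[1] + k^[2]`. -/
def sig1 (F : Type*) [Fintype F] (L : Type*) [Field L] (k : L) : L :=
  k + frk F L 1 k + frk F L 2 k

/-- `σ₂(k) = k·k^[1] + k·k^[2] + k^[1]·k^[2]`. -/
def sig2 (F : Type*) [Fintype F] (L : Type*) [Field L] (k : L) : L :=
  k * frk F L 1 k + k * frk F L 2 k + frk F L 1 k * frk F L 2 k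

/-- `σ₃(k) = k·k^[1]·k^[2]`. -/
def sig3 (F : Type*) [Fintype F] (L : Type*) [Field L] (k : L) : L :=
  k * frk F L 1 k * frk F L 2 k

/-- `φ(k,k̂) = (k+k̂)(σ₁(k̂)−k̂) − σ₂(k̂)`. -/
def phiM (F : Type*) [Fintype F] (L : Type*) [Field L] (k khat : L) : L :=
  (k + khat) * (sig1 F L khat - khat) - sig2 F L khat

/-- `Σ₁(k,k̂)`, with rows `(0,0,σ₃(k))`, `(1,0,−σ₂(k))`, `(0,1,σ₁(k))`. -/
def Sig1 (F : Type*) [Fintype F] (L : Type*) [Field L] (k khat : L) :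
    Matrix (Fin 3) (Fin 3) L :=
  !![0, 0, sig3 F L k; 1, 0, -(sig2 F L k); 0, 1, sig1 F L k]

/-- `Σ₂(k,k̂)`. -/
def Sig2 (F : Type*) [Fintype F] (L : Type*) [Field L] (k khat : L) :
    Matrix (Fin 3) (Fin 3) L :=
  !![0, sig3 F L khat,
       sig1 F L k * sig3 F L khat + sig1 F L khat * sig3 F L k - sig2 F L (k * khat);
     0, -(sig2 F L khat), -(sig3 F L (k + khat));
     1, sig1 F L khat, sig1 F L k * sig1 F L khat - sig1 F L (k * khat)]


set_option linter.unusedSectionVars false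
set_option maxHeartbeats 1000000


lemma core {K : Type*} [Field K] (a b c : K) (ha : a ≠ 0)
    (hab : a * b = c * c) (hbc : b * c = a * a)
    (hE3 : (a + b) * ((b + c) * (c + a)) = 8 * (a * (b * c))) : a = b := by
  have hc : c ≠ 0 := by
    rintro rfl
    apply ha
    have h0 : a * a = 0 := by linear_combination -hbc
    exact mul_self_eq_zero.1 h0
  set t := b / a with htdef
  have ht : a * t = b := by rw [htdef]; field_simp
  have hbb : b * b = a * c := by
    have h2 : (b * b) * (a * c) = (a * c) * (a * c) := by
      linear_combination (b * c) * hab + (c * c) * hbc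
    exact mul_right_cancel₀ (mul_ne_zero ha hc) h2
  have hc2 : a * (t * t) = c := by
    have h2 : a * (a * (t * t)) = a * c := by
      calc a * (a * (t * t)) = (a * t) * (a * t) := by ring
        _ = b * b := by rw [ht]
        _ = a * c := hbb
    exact mul_left_cancel₀ ha h2
  rw [← ht, ← hc2] at hE3
  have key : (1 + t) * ((t + t * t) * (t * t + 1)) = 8 * (t * (t * t)) := by
    have h2 : a ^ 3 * ((1 + t) * ((t + t * t) * (t * t + 1)))
        = a ^ 3 * (8 * (t * (t * t))) := by linear_combination hE3
    exact mul_left_cancel₀ (pow_ne_zero 3 ha) h2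
  have ht3 : t ^ 3 = 1 := by
    have h2 : a ^ 3 * t ^ 3 = a ^ 3 * 1 := by
      calc a ^ 3 * t ^ 3 = (a * t) * ((a * t) * (a * t)) := by ring
        _ = b * (b * b) := by rw [ht]
        _ = b * (a * c) := by rw [hbb]
        _ = a * (b * c) := by ring
        _ = a * (a * a) := by rw [hbc]
        _ = a ^ 3 * 1 := by ring
    exact mul_left_cancel₀ (pow_ne_zero 3 ha) h2
  have hfac : (t - 1) * (t * t + t + 1) = 0 := by linear_combination ht3
  rcases mul_eq_zero.1 hfac with h1 | h1
  · rw [← ht, sub_eq_zero.1 h1, mul_one]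
  · have h9 : (9 : K) = 0 := by
      linear_combination (-1 : K) * key + (t * t * t + t * t - 8 * t + 9) * h1
    have h3 : (3 : K) = 0 := by
      have h33 : (3 : K) * 3 = 0 := by linear_combination h9
      rcases mul_eq_zero.1 h33 with h | h <;> exact h
    have htm : (t - 1) ^ 3 = 0 := by
      linear_combination ht3 - (t * t - t) * h3
    have ht1 : t = 1 := by
      have := pow_eq_zero_iff (n := 3) (by norm_num) |>.1 htm
      exact sub_eq_zero.1 this
    rw [← ht, ht1, mul_one]

section Aux
variable {F : Type*} [Field F] [Fintype F] {L : Type*} [Field L] [Algebra F L]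

lemma frk_zero (x : L) : frk F L 0 x = x := by simp [frk]

lemma frk_frk (i j : ℕ) (x : L) : frk F L i (frk F L j x) = frk F L (i + j) x := by
  simp only [frk, ← pow_mul, ← pow_add, Nat.add_comm j i]

lemma frk_mul (i : ℕ) (x y : L) : frk F L i (x * y) = frk F L i x * frk F L i y := by
  simp [frk, mul_pow]

lemma frk_add (i : ℕ) (x y : L) : frk F L i (x + y) = frk F L i x + frk F L i y := by
  obtain ⟨p, hp⟩ := CharP.exists F
  haveI := hp
  haveI hpp : Fact p.Prime := ⟨CharP.char_is_prime F p⟩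
  haveI : CharP L p := charP_of_injective_algebraMap (algebraMap F L).injective p
  obtain ⟨m, -, hcard⟩ := FiniteField.card F p
  simp only [frk, hcard, ← pow_mul]
  exact add_pow_char_pow ..

variable (hL : Module.finrank F L = 3)
include hL

lemma frk_three (x : L) : frk F L 3 x = x := by
  haveI : FiniteDimensional F L := FiniteDimensional.of_finrank_pos (by omega)
  haveI : Finite L := Module.finite_of_finite F
  haveI : Fintype L := Fintype.ofFinite L
  rw [frk, ← hL, ← Module.card_eq_pow_finrank (K := F), FiniteField.pow_card]

lemma frk_mod3 (i : ℕ) (x : L) : frk F L i x = frk F L (i % 3) x := by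
  conv_lhs => rw [← Nat.div_add_mod i 3]
  generalize i / 3 = m
  induction m with
  | zero => simp
  | succ m ih =>
    have h : 3 * (m + 1) + i % 3 = 3 + (3 * m + i % 3) := by ring
    rw [h, ← frk_frk, frk_frk 3, Nat.add_comm 3, ← frk_frk, frk_three hL, ih]

lemma sig1_frk1 (x : L) : sig1 F L (frk F L 1 x) = sig1 F L x := by
  simp only [sig1, frk_frk, frk_three hL]; ring

lemma sig2_frk1 (x : L) : sig2 F L (frk F L 1 x) = sig2 F L x := by
  simp only [sig2, frk_frk, frk_three hL]; ring

lemma sig3_frk1 (x : L) : sig3 F L (frk F L 1 x) = sig3 F L x := by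
  simp only [sig3, frk_frk, frk_three hL]; ring

lemma sig1_frk (i : ℕ) (x : L) : sig1 F L (frk F L i x) = sig1 F L x := by
  induction i with
  | zero => rw [frk_zero]
  | succ m ih => rw [Nat.add_comm m 1, ← frk_frk 1 m, sig1_frk1 hL, ih]

lemma sig2_frk (i : ℕ) (x : L) : sig2 F L (frk F L i x) = sig2 F L x := by
  induction i with
  | zero => rw [frk_zero]
  | succ m ih => rw [Nat.add_comm m 1, ← frk_frk 1 m, sig2_frk1 hL, ih]

lemma sig3_frk (i : ℕ) (x : L) : sig3 F L (frk F L i x) = sig3 F L x := by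
  induction i with
  | zero => rw [frk_zero]
  | succ m ih => rw [Nat.add_comm m 1, ← frk_frk 1 m, sig3_frk1 hL, ih]

omit hL

lemma sig3_mul (x y : L) : sig3 F L (x * y) = sig3 F L x * sig3 F L y := by
  simp only [sig3, frk_mul]; ring

lemma conj_of_sig_eq (x y : L) (h1 : sig1 F L x = sig1 F L y)
    (h2 : sig2 F L x = sig2 F L y) (h3 : sig3 F L x = sig3 F L y) :
    y = x ∨ y = frk F L 1 x ∨ y = frk F L 2 x := by
  have e : ∀ z : L, (y - z) * ((y - frk F L 1 z) * (y - frk F L 2 z))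
      = y * y * y - sig1 F L z * (y * y) + sig2 F L z * y - sig3 F L z := by
    intro z; simp only [sig1, sig2, sig3]; ring
  have key : (y - x) * ((y - frk F L 1 x) * (y - frk F L 2 x)) = 0 := by
    rw [e, h1, h2, h3, ← e, sub_self, zero_mul]
  rcases mul_eq_zero.1 key with h | h
  · exact Or.inl (sub_eq_zero.1 h).symm.symm
  · rcases mul_eq_zero.1 h with h | h
    · exact Or.inr (Or.inl (sub_eq_zero.1 h))
    · exact Or.inr (Or.inr (sub_eq_zero.1 h))

lemma mem_range_of_pow_card (x : L) (h : x ^ Fintype.card F = x) :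
    x ∈ Set.range (algebraMap F L) := by
  classical
  set q := Fintype.card F with hq
  have hq2 : 2 ≤ q := Fintype.one_lt_card
  set P : Polynomial L := X ^ q - X with hP
  have hPdeg : P.natDegree = q := by
    rw [hP]
    compute_degree!
    · rw [if_neg (by omega : ¬ (1 = q))]
      norm_num
    · omega
  have hPne : P ≠ 0 := by
    intro h0
    rw [h0, natDegree_zero] at hPdeg
    omega
  have hroot : ∀ z : L, z ^ q = z → z ∈ P.roots := by
    intro z hz
    rw [mem_roots hPne]
    simp [hP, IsRoot, hz]
  have himg : (Finset.univ.image (algebraMap F L)) ⊆ P.roots.toFinset := by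
    intro z hz
    simp only [Finset.mem_image] at hz
    obtain ⟨c, -, rfl⟩ := hz
    rw [Multiset.mem_toFinset]
    exact hroot _ (by rw [← map_pow, FiniteField.pow_card])
  have hcard1 : (Finset.univ.image (algebraMap F L)).card = q := by
    rw [Finset.card_image_of_injective _ (algebraMap F L).injective, Finset.card_univ]
  have hcard2 : P.roots.toFinset.card ≤ q := by
    calc P.roots.toFinset.card ≤ Multiset.card P.roots := Multiset.toFinset_card_le _
    _ ≤ P.natDegree := P.card_roots'
    _ = q := hPdeg
  have heq : (Finset.univ.image (algebraMap F L)) = P.roots.toFinset :=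
    Finset.eq_of_subset_of_card_le himg (by omega)
  have hx : x ∈ P.roots.toFinset := Multiset.mem_toFinset.2 (hroot x h)
  rw [← heq] at hx
  simp only [Finset.mem_image] at hx
  obtain ⟨c, -, hc⟩ := hx
  exact ⟨c, hc⟩

include hL

lemma mem_range_of_frk1 (x : L) (h : frk F L 1 x = x) :
    x ∈ Set.range (algebraMap F L) := by
  rw [frk, pow_one] at h
  exact mem_range_of_pow_card x h

lemma mem_range_of_frk2 (x : L) (h : frk F L 2 x = x) :
    x ∈ Set.range (algebraMap F L) := by
  apply mem_range_of_frk1 hL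
  have := congrArg (frk F L 1) h
  rw [frk_frk, frk_three hL] at this
  exact this.symm


variable (hL : Module.finrank F L = 3)
include hL

lemma Sig_frk (r : ℕ) (x y : L) :
    Sig1 F L (frk F L r x) (frk F L r y) = Sig1 F L x y ∧
    Sig2 F L (frk F L r x) (frk F L r y) = Sig2 F L x y := by
  constructor <;>
    simp only [Sig1, Sig2, ← frk_mul, ← frk_add, sig1_frk hL, sig2_frk hL, sig3_frk hL]

lemma bad (k : L) (hk : k ∉ Set.range (algebraMap F L)) (n : ℕ) (hn : n = 1 ∨ n = 2)
    (h1 : sig1 F L (k * frk F L n k) = sig1 F L (k * k))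
    (h2 : sig2 F L (k * frk F L n k) = sig2 F L (k * k))
    (h3 : sig3 F L (k + frk F L n k) = sig3 F L (k + k)) : False := by
  set b := frk F L 1 k with hbdef
  set c := frk F L 2 k with hcdef
  have ha0 : k ≠ 0 := by
    rintro rfl
    exact hk ⟨0, by simp⟩
  have hb0 : b ≠ 0 := pow_ne_zero _ ha0
  have hc0 : c ≠ 0 := pow_ne_zero _ ha0
  have hfb : frk F L 1 b = c := by rw [hbdef, frk_frk]
  have hfc : frk F L 1 c = k := by rw [hcdef, frk_frk, frk_three hL]
  have hf2b : frk F L 2 b = k := by rw [hbdef, frk_frk, frk_three hL]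
  have hf2c : frk F L 2 c = b := by
    rw [hcdef, frk_frk, frk_mod3 hL 4]
  have fixb : b ≠ k := fun h => hk (mem_range_of_frk1 hL k h)
  have fixc : c ≠ k := fun h => hk (mem_range_of_frk2 hL k h)
  have hs3 : sig3 F L (k * k) = sig3 F L (k * frk F L n k) := by
    rw [sig3_mul, sig3_mul, sig3_frk hL]
  have e1 : frk F L 1 (k * k) = b * b := by rw [frk_mul, ← hbdef]
  have e2 : frk F L 2 (k * k) = c * c := by rw [frk_mul, ← hcdef]
  have conj := conj_of_sig_eq (k * k) (k * frk F L n k) h1.symm h2.symm hs3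
  rcases hn with rfl | rfl
  · -- n = 1 : khat-slot is b
    rcases conj with h | h | h
    · exact fixb (mul_left_cancel₀ ha0 h)
    · rw [e1] at h
      exact fixb (mul_right_cancel₀ hb0 h).symm
    · rw [e2] at h
      have hbc : b * c = k * k := by
        have h' := congrArg (frk F L 1) h
        rw [frk_mul, frk_mul, ← hbdef, hfb, hfc] at h'
        exact h'
      have hE3 : (k + b) * ((b + c) * (c + k)) = 8 * (k * (b * c)) := by
        have e3L : sig3 F L (k + b) = (k + b) * ((b + c) * (c + k)) := by
          simp only [sig3, frk_add, ← hbdef, ← hcdef, hfb, hfc, hf2b, hf2c]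
          ring
        have e3R : sig3 F L (k + k) = 8 * (k * (b * c)) := by
          simp only [sig3, frk_add, ← hbdef, ← hcdef]
          ring
        rw [← e3L, ← e3R]
        exact h3
      exact fixb (core k b c ha0 h hbc hE3).symm
  · -- n = 2 : khat-slot is c
    rcases conj with h | h | h
    · exact fixc (mul_left_cancel₀ ha0 h)
    · rw [e1] at h
      -- h : k * c = b * b
      have h' := congrArg (frk F L 1) h
      rw [frk_mul, frk_mul, ← hbdef, hfc, hfb] at h'
      -- h' : b * k = c * c
      have hab2 : k * b = c * c := by rw [mul_comm]; exact h'
      have hbc : b * c = k * k := by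
        have h'' := congrArg (frk F L 1) hab2
        rw [frk_mul, frk_mul, ← hbdef, hfb, hfc] at h''
        exact h''
      have hE3 : (k + b) * ((b + c) * (c + k)) = 8 * (k * (b * c)) := by
        have e3L : sig3 F L (k + c) = (k + b) * ((b + c) * (c + k)) := by
          simp only [sig3, frk_add, ← hbdef, ← hcdef, hfb, hfc, hf2b, hf2c]
          ring
        have e3R : sig3 F L (k + k) = 8 * (k * (b * c)) := by
          simp only [sig3, frk_add, ← hbdef, ← hcdef]
          ring
        rw [← e3L, ← e3R]
        exact h3
      exact fixb (core k b c ha0 hab2 hbc hE3).symm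
    · rw [e2] at h
      exact fixc (mul_right_cancel₀ hc0 h).symm

end Aux

/-- for `k, k̂, ℓ, ℓ̂ ∈ L \ F` with `k̂ = k^[n]`, `n ∈ {1,2}`, the
matrix pairs `(Σ₁, Σ₂)` coincide iff `(ℓ, ℓ̂) = (k^[r], k^[n+r])` or
`(ℓ, ℓ̂) = (k^[n+r], k^[r])` for some `r ∈ {0,1,2}` (exponents mod 3). -/
theorem Sigma_injectivity_conjugate (F : Type*) [Field F] [Fintype F]
    (L : Type*) [Field L] [Algebra F L] (hL : Module.finrank F L = 3)
    (k khat l lhat : L)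
    (hk : k ∉ Set.range (algebraMap F L)) (hkhat : khat ∉ Set.range (algebraMap F L))
    (hl : l ∉ Set.range (algebraMap F L)) (hlhat : lhat ∉ Set.range (algebraMap F L))
    (n : ℕ) (hn : n = 1 ∨ n = 2) (hkh : khat = frk F L n k) :
    (Sig1 F L k khat = Sig1 F L l lhat ∧ Sig2 F L k khat = Sig2 F L l lhat) ↔
      ∃ r : Fin 3, (l = frk F L (r : ℕ) k ∧ lhat = frk F L ((n + (r : ℕ)) % 3) k) ∨
        (l = frk F L ((n + (r : ℕ)) % 3) k ∧ lhat = frk F L (r : ℕ) k) := by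
  constructor
  · rintro ⟨hS1, hS2⟩
    have e11 : sig1 F L k = sig1 F L l := by
      have h := congrFun (congrFun hS1 2) 2; simpa [Sig1] using h
    have e12 : sig2 F L k = sig2 F L l := by
      have h := congrFun (congrFun hS1 1) 2; simpa [Sig1] using h
    have e13 : sig3 F L k = sig3 F L l := by
      have h := congrFun (congrFun hS1 0) 2; simpa [Sig1] using h
    have f1 : sig1 F L khat = sig1 F L lhat := by
      have h := congrFun (congrFun hS2 2) 1; simpa [Sig2] using h
    have f2 : sig2 F L khat = sig2 F L lhat := by
      have h := congrFun (congrFun hS2 1) 1; simpa [Sig2] using h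
    have f3 : sig3 F L khat = sig3 F L lhat := by
      have h := congrFun (congrFun hS2 0) 1; simpa [Sig2] using h
    have g2' : sig1 F L k * sig3 F L khat + sig1 F L khat * sig3 F L k - sig2 F L (k * khat)
        = sig1 F L l * sig3 F L lhat + sig1 F L lhat * sig3 F L l - sig2 F L (l * lhat) := by
      have h := congrFun (congrFun hS2 0) 2; simpa [Sig2] using h
    have g1' : sig1 F L k * sig1 F L khat - sig1 F L (k * khat)
        = sig1 F L l * sig1 F L lhat - sig1 F L (l * lhat) := by
      have h := congrFun (congrFun hS2 2) 2; simpa [Sig2] using h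
    have g3 : sig3 F L (k + khat) = sig3 F L (l + lhat) := by
      have h := congrFun (congrFun hS2 1) 2; simpa [Sig2] using h
    have g2 : sig2 F L (k * khat) = sig2 F L (l * lhat) := by
      linear_combination -g2' + sig3 F L khat * e11 + sig1 F L l * f3
        + sig3 F L k * f1 + sig1 F L lhat * e13
    have g1 : sig1 F L (k * khat) = sig1 F L (l * lhat) := by
      linear_combination -g1' + sig1 F L khat * e11 + sig1 F L l * f1
    have badcase : ∀ i : ℕ, l = frk F L i k → lhat = frk F L i k → False := by
      intro i Hl Hlh
      apply bad hL k hk n hn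
      · rw [← hkh, g1, Hl, Hlh, ← frk_mul, sig1_frk hL]
      · rw [← hkh, g2, Hl, Hlh, ← frk_mul, sig2_frk hL]
      · rw [← hkh, g3, Hl, Hlh, ← frk_add, sig3_frk hL]
    have hlc := conj_of_sig_eq k l e11 e12 e13
    have hlhc := conj_of_sig_eq khat lhat f1 f2 f3
    rcases hn with rfl | rfl
    · subst hkh
      rw [frk_frk, frk_frk] at hlhc
      norm_num at hlhc
      rw [frk_three hL] at hlhc
      rcases hlc with Hl | Hl | Hl <;> rcases hlhc with Hlh | Hlh | Hlh
      · exact ⟨0, Or.inl ⟨by simpa [frk_zero] using Hl, by simpa using Hlh⟩⟩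
      · exact ⟨2, Or.inr ⟨by simpa [frk_zero] using Hl, by simpa using Hlh⟩⟩
      · exact (badcase 0 (by rwa [frk_zero]) (by rwa [frk_zero])).elim
      · exact (badcase 1 Hl Hlh).elim
      · exact ⟨1, Or.inl ⟨by simpa using Hl, by simpa using Hlh⟩⟩
      · exact ⟨0, Or.inr ⟨by simpa using Hl, by simpa [frk_zero] using Hlh⟩⟩
      · exact ⟨1, Or.inr ⟨by simpa using Hl, by simpa using Hlh⟩⟩
      · exact (badcase 2 Hl Hlh).elim
      · exact ⟨2, Or.inl ⟨by simpa using Hl, by simpa [frk_zero] using Hlh⟩⟩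
    · subst hkh
      rw [frk_frk, frk_frk] at hlhc
      norm_num at hlhc
      rw [frk_three hL, frk_mod3 hL 4] at hlhc
      norm_num at hlhc
      rcases hlc with Hl | Hl | Hl <;> rcases hlhc with Hlh | Hlh | Hlh
      · exact ⟨0, Or.inl ⟨by simpa [frk_zero] using Hl, by simpa using Hlh⟩⟩
      · exact (badcase 0 (by rwa [frk_zero]) (by rwa [frk_zero])).elim
      · exact ⟨1, Or.inr ⟨by simpa [frk_zero] using Hl, by simpa using Hlh⟩⟩
      · exact ⟨2, Or.inr ⟨by simpa using Hl, by simpa using Hlh⟩⟩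
      · exact ⟨1, Or.inl ⟨by simpa using Hl, by simpa [frk_zero] using Hlh⟩⟩
      · exact (badcase 1 Hl Hlh).elim
      · exact (badcase 2 Hl Hlh).elim
      · exact ⟨0, Or.inr ⟨by simpa using Hl, by simpa [frk_zero] using Hlh⟩⟩
      · exact ⟨2, Or.inl ⟨by simpa using Hl, by simpa using Hlh⟩⟩
  · rintro ⟨r, hcase⟩
    have hswap : Sig1 F L khat k = Sig1 F L k khat ∧ Sig2 F L khat k = Sig2 F L k khat := by
      subst hkh
      constructor
      · simp only [Sig1, sig1_frk hL, sig2_frk hL, sig3_frk hL]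
      · simp only [Sig2]
        rw [mul_comm (frk F L n k) k, add_comm (frk F L n k) k]
        simp only [sig1_frk hL, sig2_frk hL, sig3_frk hL]
    have key : frk F L ((r : ℕ)) khat = frk F L ((n + (r : ℕ)) % 3) k := by
      rw [hkh, frk_frk, Nat.add_comm, frk_mod3 hL (n + (r : ℕ)) k]
    rcases hcase with ⟨hl', hlh'⟩ | ⟨hl', hlh'⟩
    · constructor
      · rw [hl', hlh', ← key]
        exact ((Sig_frk hL (r : ℕ) k khat).1).symm
      · rw [hl', hlh', ← key]
        exact ((Sig_frk hL (r : ℕ) k khat).2).symm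
    · constructor
      · rw [hl', hlh', ← key]
        exact (hswap.1.symm.trans ((Sig_frk hL (r : ℕ) khat k).1).symm)
      · rw [hl', hlh', ← key]
        exact (hswap.2.symm.trans ((Sig_frk hL (r : ℕ) khat k).2).symm)
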